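/- Let N ≥ 3, r ≥ 1, and fix nonzero complex numbers z_1, ..., z_r. For a permutation σ of {1,...,r} and 1 ≤ t ≤ r+1, set f_{t,σ} := ∏_{j=1}^{t-1} z_{σ(j)} (empty product = 1) and ξ_σ(t) := f_{t,σ}·f_{r+1,σ}⁻¹; let ≺_σ be the order on {1,...,r+1} defined from ξ_σ. Define the permutation σ̃ by σ̃(1) := σ(r) and σ̃(j) := σ(j-1) for 2 ≤ j ≤ r, and let B_σ := {1 ≤ t ≤ r+1 : m(z_{σ(r)}·ξ_σ(t)) ≡ m(z_{σ(r)}) + m(ξ_σ(t)) (mod N)}. Then for all t, t' ∈ {1,...,r} with t ∈ B_σ and t' ∉ B_σ, one has t ≺_σ t' and t'+1 ≺_{σ̃} t+1. -/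
import Mathlib


/-- The principal argument of a nonzero complex number, normalized to lie in `[-π, π)`. -/
noncomputable def parg (z : ℂ) : ℝ :=
  if Complex.arg z = Real.pi then -Real.pi else Complex.arg z

/-- `m(z) := ⌈-N·arg(z)/(2π)⌉` where `arg(z) ∈ [-π, π)`. -/
noncomputable def mfun (N : ℤ) (z : ℂ) : ℤ :=
  ⌈(-(N : ℝ) * parg z) / (2 * Real.pi)⌉

/-- `t ≺ t'` iff `m(ξ(t')·ξ(t)⁻¹) ≡ m(ξ(t')) - m(ξ(t)) (mod N)` and, in addition,
`m(ξ(t')·ξ(t)⁻¹) + m(ξ(t)·ξ(t')⁻¹) ≡ 1 (mod N)` or `t' < t`. -/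
def prec (N : ℤ) (ξ : ℕ → ℂ) (t t' : ℕ) : Prop :=
  mfun N (ξ t' * (ξ t)⁻¹) ≡ mfun N (ξ t') - mfun N (ξ t) [ZMOD N] ∧
  (mfun N (ξ t' * (ξ t)⁻¹) + mfun N (ξ t * (ξ t')⁻¹) ≡ 1 [ZMOD N] ∨ t' < t)

/-- `f_{t,s} := ∏_{j=1}^{t-1} z_{s(j)}` (empty product for `t = 1`). -/
def fprod (z : ℕ → ℂ) (s : ℕ → ℕ) (t : ℕ) : ℂ :=
  ∏ j ∈ Finset.Icc 1 (t - 1), z (s j)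

/-- `ξ_s(t) := f_{t,s}·f_{r+1,s}⁻¹`. -/
noncomputable def xi (r : ℕ) (z : ℕ → ℂ) (s : ℕ → ℕ) (t : ℕ) : ℂ :=
  fprod z s t * (fprod z s (r + 1))⁻¹

/-- `t ∈ B_σ` iff `m(z_{σ(r)}·ξ_σ(t)) ≡ m(z_{σ(r)}) + m(ξ_σ(t)) (mod N)`. -/
def Bmem (N : ℤ) (r : ℕ) (z : ℕ → ℂ) (σ : ℕ → ℕ) (t : ℕ) : Prop :=
  mfun N (z (σ r) * xi r z σ t) ≡ mfun N (z (σ r)) + mfun N (xi r z σ t) [ZMOD N]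



noncomputable def Afun (N : ℤ) (z : ℂ) : ℝ := (-(N : ℝ) * parg z) / (2 * Real.pi)

lemma mfun_eq (N : ℤ) (z : ℂ) : mfun N z = ⌈Afun N z⌉ := rfl

lemma parg_coe (z : ℂ) : ((parg z : ℝ) : Real.Angle) = (Complex.arg z : Real.Angle) := by
  unfold parg
  split
  · rename_i h; rw [h, Real.Angle.coe_neg, Real.Angle.neg_coe_pi]
  · rfl

lemma parg_mul {u v : ℂ} (hu : u ≠ 0) (hv : v ≠ 0) :
    ∃ k : ℤ, parg (u * v) = parg u + parg v + 2 * Real.pi * k := by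
  have h : ((parg (u * v) : ℝ) : Real.Angle) = ((parg u + parg v : ℝ) : Real.Angle) := by
    rw [parg_coe, Complex.arg_mul_coe_angle hu hv, Real.Angle.coe_add, parg_coe, parg_coe]
  rw [Real.Angle.angle_eq_iff_two_pi_dvd_sub] at h
  obtain ⟨k, hk⟩ := h
  exact ⟨k, by linarith⟩

lemma parg_inv {u : ℂ} (hu : u ≠ 0) :
    ∃ k : ℤ, parg u⁻¹ = -parg u + 2 * Real.pi * k := by
  have h : ((parg u⁻¹ : ℝ) : Real.Angle) = ((-parg u : ℝ) : Real.Angle) := by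
    rw [parg_coe, Complex.arg_inv_coe_angle, Real.Angle.coe_neg, parg_coe]
  rw [Real.Angle.angle_eq_iff_two_pi_dvd_sub] at h
  obtain ⟨k, hk⟩ := h
  exact ⟨k, by linarith⟩

lemma Afun_mul {N : ℤ} {u v : ℂ} (hu : u ≠ 0) (hv : v ≠ 0) :
    ∃ k : ℤ, Afun N (u * v) = Afun N u + Afun N v + N * k := by
  obtain ⟨k, hk⟩ := parg_mul hu hv
  refine ⟨-k, ?_⟩
  have hπ : (2 * Real.pi) ≠ 0 := by positivity
  unfold Afun
  rw [hk]
  push_cast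
  field_simp
  ring

lemma Afun_div {N : ℤ} {u v : ℂ} (hu : u ≠ 0) (hv : v ≠ 0) :
    ∃ k : ℤ, Afun N (v * u⁻¹) = Afun N v - Afun N u + N * k := by
  obtain ⟨k1, hk1⟩ := parg_mul hv (inv_ne_zero hu)
  obtain ⟨k2, hk2⟩ := parg_inv hu
  refine ⟨-(k1 + k2), ?_⟩
  have hπ : (2 * Real.pi) ≠ 0 := by positivity
  unfold Afun
  rw [hk1, hk2]
  push_cast
  field_simp
  ring

lemma ceil_sub_of_le {a b : ℝ} (h : (⌈a⌉ : ℝ) - a ≤ (⌈b⌉ : ℝ) - b) :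
    ⌈b - a⌉ = ⌈b⌉ - ⌈a⌉ := by
  rw [Int.ceil_eq_iff]
  have h1 := Int.le_ceil a
  have h2 := Int.le_ceil b
  have h3 := Int.ceil_lt_add_one a
  have h4 := Int.ceil_lt_add_one b
  push_cast
  constructor <;> linarith

lemma ceil_sub_of_lt {a b : ℝ} (h : (⌈a⌉ : ℝ) - a < (⌈b⌉ : ℝ) - b) :
    ⌈a - b⌉ = ⌈a⌉ - ⌈b⌉ + 1 := by
  rw [Int.ceil_eq_iff]
  have h1 := Int.le_ceil a
  have h2 := Int.le_ceil b
  have h4 := Int.ceil_lt_add_one b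
  push_cast
  constructor <;> linarith

lemma ceil_add_lower (a b : ℝ) : ⌈a⌉ + ⌈b⌉ - 1 ≤ ⌈a + b⌉ := by
  have h3 := Int.ceil_lt_add_one a
  have h4 := Int.ceil_lt_add_one b
  have : ((⌈a⌉ + ⌈b⌉ - 2 : ℤ) : ℝ) < a + b := by push_cast; linarith
  have := Int.lt_ceil.mpr this
  omega

lemma modeq_add_mul (N x k : ℤ) : x + N * k ≡ x [ZMOD N] :=
  Int.ModEq.symm (Int.modEq_iff_dvd.mpr ⟨k, by ring⟩)

lemma eq_of_modeq_small {N x y : ℤ} (hN : 3 ≤ N) (h : x ≡ y [ZMOD N])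
    (h1 : y - 1 ≤ x) (h2 : x ≤ y) : x = y := by
  have hd : N ∣ y - x := Int.ModEq.dvd h
  have := Int.eq_zero_of_abs_lt_dvd hd (by rw [abs_lt]; omega)
  omega

lemma mfun_div_eq {N : ℤ} {u v : ℂ} (hu : u ≠ 0) (hv : v ≠ 0) :
    ∃ k : ℤ, mfun N (v * u⁻¹) = ⌈Afun N v - Afun N u⌉ + N * k := by
  obtain ⟨k, hk⟩ := Afun_div hu hv
  refine ⟨k, ?_⟩
  rw [mfun_eq, hk]
  rw [show Afun N v - Afun N u + (N : ℝ) * k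
      = (Afun N v - Afun N u) + ((N * k : ℤ) : ℝ) by push_cast; ring,
    Int.ceil_add_intCast]

lemma mfun_mul_eq {N : ℤ} {u v : ℂ} (hu : u ≠ 0) (hv : v ≠ 0) :
    ∃ k : ℤ, mfun N (u * v) = ⌈Afun N u + Afun N v⌉ + N * k := by
  obtain ⟨k, hk⟩ := Afun_mul hu hv
  refine ⟨k, ?_⟩
  rw [mfun_eq, hk]
  rw [show Afun N u + Afun N v + (N : ℝ) * k
      = (Afun N u + Afun N v) + ((N * k : ℤ) : ℝ) by push_cast; ring,
    Int.ceil_add_intCast]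

lemma mfun_mul_modeq {N : ℤ} {u v : ℂ} (hu : u ≠ 0) (hv : v ≠ 0) :
    mfun N (u * v) ≡ ⌈Afun N u + Afun N v⌉ [ZMOD N] := by
  obtain ⟨k, hk⟩ := mfun_mul_eq (N := N) hu hv
  rw [hk]; exact modeq_add_mul N _ k

lemma defect_mul {N : ℤ} {u v : ℂ} (hu : u ≠ 0) (hv : v ≠ 0) :
    (⌈Afun N (u * v)⌉ : ℝ) - Afun N (u * v)
      = (⌈Afun N u + Afun N v⌉ : ℝ) - (Afun N u + Afun N v) := by
  obtain ⟨k, hk⟩ := Afun_mul (N := N) hu hv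
  rw [hk, show Afun N u + Afun N v + (N : ℝ) * k
      = (Afun N u + Afun N v) + ((N * k : ℤ) : ℝ) by push_cast; ring,
    Int.ceil_add_intCast]
  push_cast
  ring

lemma prec_core {N : ℤ} {u v : ℂ} (hu : u ≠ 0) (hv : v ≠ 0)
    (h : (⌈Afun N u⌉ : ℝ) - Afun N u < (⌈Afun N v⌉ : ℝ) - Afun N v) :
    (mfun N (v * u⁻¹) ≡ mfun N v - mfun N u [ZMOD N]) ∧
    mfun N (v * u⁻¹) + mfun N (u * v⁻¹) ≡ 1 [ZMOD N] := by
  obtain ⟨k1, hk1⟩ := mfun_div_eq (N := N) hu hv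
  obtain ⟨k2, hk2⟩ := mfun_div_eq (N := N) hv hu
  rw [ceil_sub_of_le h.le] at hk1
  rw [ceil_sub_of_lt h] at hk2
  constructor
  · rw [hk1, mfun_eq, mfun_eq]; exact modeq_add_mul N _ k1
  · rw [hk1, hk2,
      show ⌈Afun N v⌉ - ⌈Afun N u⌉ + N * k1 + (⌈Afun N u⌉ - ⌈Afun N v⌉ + 1 + N * k2)
        = 1 + N * (k1 + k2) by ring]
    exact modeq_add_mul N 1 (k1 + k2)

lemma main_core {N : ℤ} (hN : 3 ≤ N) {w A B : ℂ} (hw : w ≠ 0) (hA : A ≠ 0) (hB : B ≠ 0)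
    (hBt : mfun N (w * A) ≡ mfun N w + mfun N A [ZMOD N])
    (hBt' : ¬ mfun N (w * B) ≡ mfun N w + mfun N B [ZMOD N]) :
    ((mfun N (B * A⁻¹) ≡ mfun N B - mfun N A [ZMOD N]) ∧
      mfun N (B * A⁻¹) + mfun N (A * B⁻¹) ≡ 1 [ZMOD N]) ∧
    ((mfun N ((w * A) * (w * B)⁻¹) ≡ mfun N (w * A) - mfun N (w * B) [ZMOD N]) ∧
      mfun N ((w * A) * (w * B)⁻¹) + mfun N ((w * B) * (w * A)⁻¹) ≡ 1 [ZMOD N]) := by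
  have h1 := mfun_mul_modeq (N := N) hw hA
  have h2 := mfun_mul_modeq (N := N) hw hB
  have heq1 : ⌈Afun N w + Afun N A⌉ = ⌈Afun N w⌉ + ⌈Afun N A⌉ :=
    eq_of_modeq_small hN (h1.symm.trans hBt) (ceil_add_lower _ _) (Int.ceil_add_le _ _)
  have heq2 : ⌈Afun N w + Afun N B⌉ = ⌈Afun N w⌉ + ⌈Afun N B⌉ - 1 := by
    have hne : ⌈Afun N w + Afun N B⌉ ≠ ⌈Afun N w⌉ + ⌈Afun N B⌉ := by
      intro h
      apply hBt'
      rw [mfun_eq N w, mfun_eq N B, ← h]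
      exact h2
    have l := ceil_add_lower (Afun N w) (Afun N B)
    have u := Int.ceil_add_le (Afun N w) (Afun N B)
    omega
  have f1 : ((⌈Afun N w⌉ + ⌈Afun N A⌉ : ℤ) : ℝ) < Afun N w + Afun N A + 1 := by
    rw [← heq1]; exact Int.ceil_lt_add_one _
  have f2 : Afun N w + Afun N B ≤ ((⌈Afun N w⌉ + ⌈Afun N B⌉ - 1 : ℤ) : ℝ) := by
    rw [← heq2]; exact Int.le_ceil _
  push_cast at f1 f2
  have g1 := Int.le_ceil (Afun N A)
  have g2 := Int.le_ceil (Afun N B)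
  have g3 := Int.ceil_lt_add_one (Afun N A)
  have g4 := Int.ceil_lt_add_one (Afun N B)
  have hab : (⌈Afun N A⌉ : ℝ) - Afun N A < (⌈Afun N B⌉ : ℝ) - Afun N B := by linarith
  refine ⟨prec_core hA hB hab, ?_⟩
  have d1 := defect_mul (N := N) hw hA
  have d2 := defect_mul (N := N) hw hB
  have hba : (⌈Afun N (w * B)⌉ : ℝ) - Afun N (w * B)
      < (⌈Afun N (w * A)⌉ : ℝ) - Afun N (w * A) := by
    rw [d1, d2]
    have e1 : ((⌈Afun N w + Afun N A⌉ : ℤ) : ℝ)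
        = ((⌈Afun N w⌉ + ⌈Afun N A⌉ : ℤ) : ℝ) := by rw [heq1]
    have e2 : ((⌈Afun N w + Afun N B⌉ : ℤ) : ℝ)
        = ((⌈Afun N w⌉ + ⌈Afun N B⌉ - 1 : ℤ) : ℝ) := by rw [heq2]
    push_cast at e1 e2
    linarith
  exact prec_core (mul_ne_zero hw hB) (mul_ne_zero hw hA) hba

theorem stmt10 (N : ℤ) (hN : 3 ≤ N) (r : ℕ) (hr : 1 ≤ r)
    (z : ℕ → ℂ) (hz : ∀ j ∈ Finset.Icc 1 r, z j ≠ 0)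
    (σ : ℕ → ℕ) (hσ : Set.BijOn σ (Set.Icc 1 r) (Set.Icc 1 r))
    (σt : ℕ → ℕ) (hσt1 : σt 1 = σ r) (hσtj : ∀ j, 2 ≤ j → j ≤ r → σt j = σ (j - 1))
    (t t' : ℕ) (ht : t ∈ Finset.Icc 1 r) (ht' : t' ∈ Finset.Icc 1 r)
    (hBt : Bmem N r z σ t) (hBt' : ¬ Bmem N r z σ t') :
    prec N (xi r z σ) t t' ∧ prec N (xi r z σt) (t' + 1) (t + 1) := by
  obtain ⟨ht1, htr⟩ := Finset.mem_Icc.mp ht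
  obtain ⟨ht'1, ht'r⟩ := Finset.mem_Icc.mp ht'
  have hσmem : ∀ j, 1 ≤ j → j ≤ r → z (σ j) ≠ 0 := by
    intro j h1 h2
    have := hσ.mapsTo (Set.mem_Icc.mpr ⟨h1, h2⟩)
    exact hz _ (Finset.mem_Icc.mpr (Set.mem_Icc.mp this))
  have hw : z (σ r) ≠ 0 := hσmem r hr le_rfl
  have hf : ∀ s, s ≤ r + 1 → fprod z σ s ≠ 0 := by
    intro s hs
    unfold fprod
    rw [Finset.prod_ne_zero_iff]
    intro j hj
    obtain ⟨hj1, hj2⟩ := Finset.mem_Icc.mp hj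
    exact hσmem j hj1 (by omega)
  have hξ : ∀ s, s ≤ r + 1 → xi r z σ s ≠ 0 := fun s hs =>
    mul_ne_zero (hf s hs) (inv_ne_zero (hf (r + 1) le_rfl))
  have hfr1 : fprod z σ (r + 1) = z (σ r) * fprod z σ r := by
    unfold fprod
    rw [show r + 1 - 1 = r from rfl,
      show Finset.Icc 1 r = insert r (Finset.Icc 1 (r - 1)) by
        ext x; simp only [Finset.mem_Icc, Finset.mem_insert]; omega,
      Finset.prod_insert (by simp only [Finset.mem_Icc]; omega)]
  have hshift : ∀ s, 1 ≤ s → s ≤ r → fprod z σt (s + 1) = z (σ r) * fprod z σ s := by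
    intro s h1 h2
    unfold fprod
    rw [show s + 1 - 1 = s from rfl,
      show Finset.Icc 1 s = insert 1 (Finset.Icc 2 s) by
        ext x; simp only [Finset.mem_Icc, Finset.mem_insert]; omega,
      Finset.prod_insert (by simp only [Finset.mem_Icc]; omega), hσt1]
    congr 1
    refine Finset.prod_nbij' (fun j => j - 1) (fun j => j + 1) ?_ ?_ ?_ ?_ ?_
    · intro x hx; simp only [Finset.mem_Icc] at *; omega
    · intro x hx; simp only [Finset.mem_Icc] at *; omega
    · intro x hx; simp only [Finset.mem_Icc] at hx; show x - 1 + 1 = x; omega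
    · intro x hx; simp only [Finset.mem_Icc] at hx; show x + 1 - 1 = x; omega
    · intro x hx
      simp only [Finset.mem_Icc] at hx
      rw [hσtj x hx.1 (le_trans hx.2 h2)]
  have hxi_shift : ∀ s, 1 ≤ s → s ≤ r → xi r z σt (s + 1) = z (σ r) * xi r z σ s := by
    intro s h1 h2
    unfold xi
    rw [hshift s h1 h2, hshift r hr le_rfl, hfr1]
    ring
  have hξt : xi r z σ t ≠ 0 := hξ t (by omega)
  have hξt' : xi r z σ t' ≠ 0 := hξ t' (by omega)
  unfold Bmem at hBt hBt'
  obtain ⟨⟨P1, P2⟩, Q1, Q2⟩ := main_core hN hw hξt hξt' hBt hBt'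
  constructor
  · exact ⟨P1, Or.inl P2⟩
  · unfold prec
    rw [hxi_shift t ht1 htr, hxi_shift t' ht'1 ht'r]
    exact ⟨Q1, Or.inl Q2⟩
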